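/- Let G be a graph in which every vertex has degree exactly 2 (a disjoint union of cycles), and let v be any vertex of G. Then for every integer k, G has an AIM-deletion set of size ≤ k if and only if G − v has an AIM-deletion set of size ≤ k − 1. -/

import Mathlib

variable {V : Type*}

/-- `S` is an AIM-deletion set of `G`. -/
def IsAIMDel (G : SimpleGraph V) (S : Set V) : Prop :=
  ∀ v ∉ S, ∃! u, u ∉ S ∧ G.Adj v u

namespace AIMAux

open Classical in
noncomputable def other (G : SimpleGraph V) (c p : V) : V :=
  if h : (G.neighborSet c \ {p}).Nonempty then h.some else p

noncomputable def seq (G : SimpleGraph V) (v w : V) : ℕ → V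
  | 0 => v
  | 1 => w
  | (n + 2) => other G (seq G v w (n + 1)) (seq G v w n)

variable {G : SimpleGraph V}

lemma other_spec (hreg : ∀ w : V, (G.neighborSet w).ncard = 2) {c p : V} (h : G.Adj c p) :
    G.Adj c (other G c p) ∧ other G c p ≠ p := by
  obtain ⟨a, b, hab, hset⟩ := Set.ncard_eq_two.mp (hreg c)
  have hp : p ∈ G.neighborSet c := h
  have hne : (G.neighborSet c \ {p}).Nonempty := by
    rw [hset] at hp ⊢
    simp only [Set.mem_insert_iff, Set.mem_singleton_iff] at hp
    rcases hp with rfl | rfl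
    · exact ⟨b, by simp [hab.symm]⟩
    · exact ⟨a, by simp [hab]⟩
  have hmem := hne.some_mem
  rw [other, dif_pos hne]
  exact ⟨hmem.1, by simpa using hmem.2⟩

lemma eq_other (hreg : ∀ w : V, (G.neighborSet w).ncard = 2) {c p q : V}
    (hp : G.Adj c p) (hq : G.Adj c q) (hne : q ≠ p) : q = other G c p := by
  obtain ⟨ho, hop⟩ := other_spec hreg hp
  obtain ⟨a, b, hab, hset⟩ := Set.ncard_eq_two.mp (hreg c)
  have h1 : p ∈ ({a, b} : Set V) := hset ▸ hp
  have h2 : q ∈ ({a, b} : Set V) := hset ▸ hq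
  have h3 : other G c p ∈ ({a, b} : Set V) := hset ▸ ho
  simp only [Set.mem_insert_iff, Set.mem_singleton_iff] at h1 h2 h3
  rcases h1 with rfl | rfl <;> rcases h2 with rfl | rfl <;> rcases h3 with h3 | h3 <;> simp_all

lemma other_other (hreg : ∀ w : V, (G.neighborSet w).ncard = 2) {c p : V} (hp : G.Adj c p) :
    other G c (other G c p) = p :=
  (eq_other hreg (other_spec hreg hp).1 hp (other_spec hreg hp).2.symm).symm

section Seq

variable (hreg : ∀ w : V, (G.neighborSet w).ncard = 2) {v w : V} (hvw : G.Adj v w)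

lemma seq_two (n : ℕ) : seq G v w (n + 2) = other G (seq G v w (n + 1)) (seq G v w n) := by
  rw [seq]

lemma seq_zero : seq G v w 0 = v := by rw [seq]

lemma seq_one : seq G v w 1 = w := by rw [seq]

include hreg hvw

lemma seq_adj : ∀ n, G.Adj (seq G v w n) (seq G v w (n + 1)) := by
  intro n
  induction n with
  | zero => exact hvw
  | succ m ih =>
    rw [seq_two]
    exact (other_spec hreg ih.symm).1

lemma seq_ne (n : ℕ) : seq G v w (n + 2) ≠ seq G v w n := by
  rw [seq_two]
  exact (other_spec hreg (seq_adj hreg hvw n).symm).2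

lemma seq_back (n : ℕ) :
    other G (seq G v w (n + 1)) (seq G v w (n + 2)) = seq G v w n := by
  conv_lhs => rw [seq_two]
  exact other_other hreg (seq_adj hreg hvw n).symm

end Seq


section Seq2

variable [Fintype V] (hreg : ∀ w : V, (G.neighborSet w).ncard = 2) {v w : V} (hvw : G.Adj v w)

include hreg hvw

lemma seq_period : ∃ d, 0 < d ∧ ∀ n, seq G v w (n + d) = seq G v w n := by
  classical
  have back : ∀ i j, seq G v w (i + 1) = seq G v w (j + 1) →
      seq G v w (i + 2) = seq G v w (j + 2) →
      seq G v w i = seq G v w j := by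
    intro i j h1 h2
    rw [← seq_back hreg hvw i, ← seq_back hreg hvw j, h1, h2]
  have descend : ∀ t i j,
      (seq G v w (i + t) = seq G v w (j + t) ∧ seq G v w (i + t + 1) = seq G v w (j + t + 1)) →
      seq G v w i = seq G v w j ∧ seq G v w (i + 1) = seq G v w (j + 1) := by
    intro t
    induction t with
    | zero => intro i j h; simpa using h
    | succ s ih =>
      intro i j h
      have h' := ih (i + 1) (j + 1) (by
        constructor
        · have e1 : i + 1 + s = i + (s + 1) := by omega
          have e2 : j + 1 + s = j + (s + 1) := by omega
          rw [e1, e2]; exact h.1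
        · have e1 : i + 1 + s + 1 = i + (s + 1) + 1 := by omega
          have e2 : j + 1 + s + 1 = j + (s + 1) + 1 := by omega
          rw [e1, e2]; exact h.2)
      exact ⟨back i j h'.1 h'.2, h'.1⟩
  obtain ⟨a, b, hab, hPab⟩ := Finite.exists_ne_map_eq_of_infinite
    (fun n => (seq G v w n, seq G v w (n + 1)) : ℕ → V × V)
  have hPab1 : seq G v w a = seq G v w b := congrArg Prod.fst hPab
  have hPab2 : seq G v w (a + 1) = seq G v w (b + 1) := congrArg Prod.snd hPab
  wlog hlt : a < b generalizing a b
  · exact this b a hab.symm hPab.symm hPab1.symm hPab2.symm (by omega)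
  have h0 := descend a 0 (b - a) (by
    constructor
    · have e : b - a + a = b := by omega
      rw [zero_add, e]; exact hPab1
    · have e : b - a + a + 1 = b + 1 := by omega
      rw [zero_add, e]; exact hPab2)
  refine ⟨b - a, by omega, ?_⟩
  have key : ∀ n, seq G v w n = seq G v w (n + (b - a)) ∧
      seq G v w (n + 1) = seq G v w (n + (b - a) + 1) := by
    intro n
    induction n with
    | zero => simpa using ⟨h0.1, h0.2⟩
    | succ m ih =>
      have e0 : m + 1 + (b - a) = m + (b - a) + 1 := by omega
      rw [e0]
      refine ⟨ih.2, ?_⟩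
      have h3 : seq G v w (m + 2) = seq G v w (m + (b - a) + 2) := by
        rw [seq_two, seq_two, ih.1, ih.2]
      have e : m + (b - a) + 1 + 1 = m + (b - a) + 2 := by omega
      rw [e]; exact h3
  intro n
  exact (key n).1.symm

lemma seq_consistent {a b : ℕ} (h : seq G v w a = seq G v w b) :
    seq G v w (a + 1) = seq G v w (b + 1) := by
  classical
  by_contra hne
  obtain ⟨d, hd, hper⟩ := seq_period hreg hvw
  have perN : ∀ j n, seq G v w (n + j * d) = seq G v w n := by
    intro j
    induction j with
    | zero => intro n; simp
    | succ i ih =>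
      intro n
      have e : n + (i + 1) * d = (n + i * d) + d := by ring
      rw [e, hper, ih]
  set A : ℕ := a + (b + 3) * d with hA
  have hAb : b + 3 ≤ A := by
    have : b + 3 ≤ (b + 3) * d := Nat.le_mul_of_pos_right _ hd
    omega
  have hfA : seq G v w A = seq G v w a := perN (b + 3) a
  have hfA1 : seq G v w (A + 1) = seq G v w (a + 1) := by
    have e : A + 1 = (a + 1) + (b + 3) * d := by omega
    rw [e]; exact perN (b + 3) (a + 1)
  have h0 : seq G v w b = seq G v w A := by rw [hfA]; exact h.symm
  have hne' : seq G v w (b + 1) ≠ seq G v w (A + 1) := by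
    rw [hfA1]; exact fun hh => hne (hh ▸ rfl)
  have hadjA : G.Adj (seq G v w A) (seq G v w (A + 1)) := seq_adj hreg hvw A
  have hadjAm : G.Adj (seq G v w A) (seq G v w (A - 1)) := by
    have h' := (seq_adj hreg hvw (A - 1)).symm
    have e : A - 1 + 1 = A := by omega
    rwa [e] at h'
  have hAm_ne : seq G v w (A - 1) ≠ seq G v w (A + 1) := by
    have h' := seq_ne hreg hvw (A - 1)
    have e : A - 1 + 2 = A + 1 := by omega
    rw [e] at h'
    exact h'.symm
  have hadjb : G.Adj (seq G v w A) (seq G v w (b + 1)) := by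
    rw [← h0]; exact seq_adj hreg hvw b
  have base1 : seq G v w (b + 1) = seq G v w (A - 1) := by
    rw [eq_other hreg hadjA hadjb hne', eq_other hreg hadjA hadjAm hAm_ne]
  have M : ∀ t, t + 1 ≤ A → seq G v w (b + t) = seq G v w (A - t) ∧
      seq G v w (b + t + 1) = seq G v w (A - t - 1) := by
    intro t
    induction t with
    | zero => intro _; simpa using ⟨h0, base1⟩
    | succ s ih =>
      intro hs
      obtain ⟨ih1, ih2⟩ := ih (by omega)
      constructor
      · have e : A - (s + 1) = A - s - 1 := by omega
        have e2 : b + (s + 1) = b + s + 1 := by omega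
        rw [e, e2]; exact ih2
      · have e2 : b + (s + 1) + 1 = b + s + 2 := by omega
        rw [e2, seq_two, ih2, ih1]
        have h' := seq_back hreg hvw (A - s - 2)
        have e5 : A - s - 2 + 1 = A - s - 1 := by omega
        have e6 : A - s - 2 + 2 = A - s := by omega
        rw [e5, e6] at h'
        have e3 : A - (s + 1) - 1 = A - s - 2 := by omega
        rw [e3]; exact h'
  rcases Nat.even_or_odd (A - b) with ⟨s, hseq⟩ | ⟨s, hseq⟩
  · have hM := (M (s + 1) (by omega)).1
    have e : A - (s + 1) = b + s - 1 := by omega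
    rw [e] at hM
    have hne2 := seq_ne hreg hvw (b + s - 1)
    have e2 : b + s - 1 + 2 = b + (s + 1) := by omega
    rw [e2] at hne2
    exact hne2 hM
  · have hM := (M s (by omega)).2
    have e : A - s - 1 = b + s := by omega
    rw [e] at hM
    exact (seq_adj hreg hvw (b + s)).ne' hM

lemma seq_consistent' {a b : ℕ} (h : seq G v w (a + 1) = seq G v w (b + 1)) :
    seq G v w a = seq G v w b := by
  have h2 := seq_consistent hreg hvw h
  rw [← seq_back hreg hvw a, ← seq_back hreg hvw b, h, h2]

end Seq2

end AIMAux

theorem stmt8 [Fintype V] (G : SimpleGraph V)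
    (hreg : ∀ w : V, (G.neighborSet w).ncard = 2) (v : V) (k : ℤ) :
    (∃ S : Set V, (S.ncard : ℤ) ≤ k ∧ IsAIMDel G S) ↔
      (∃ T : Set V, Disjoint T {v} ∧ (T.ncard : ℤ) ≤ k - 1 ∧
        IsAIMDel G ({v} ∪ T)) := by
  classical
  constructor
  · rintro ⟨S, hSk, hS⟩
    suffices h : ∃ S' : Set V, v ∈ S' ∧ S'.ncard ≤ S.ncard ∧ IsAIMDel G S' by
      obtain ⟨S', hvS', hcard, hS'⟩ := h
      refine ⟨S' \ {v}, Set.disjoint_sdiff_left, ?_, ?_⟩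
      · have h1 : (S' \ {v}).ncard = S'.ncard - 1 :=
          Set.ncard_diff_singleton_of_mem hvS'
        have h2 : 1 ≤ S'.ncard := (Set.ncard_pos (Set.toFinite _)).mpr ⟨v, hvS'⟩
        omega
      · rwa [Set.singleton_union, Set.insert_diff_singleton, Set.insert_eq_self.mpr hvS']
    by_cases hv : v ∈ S
    · exact ⟨S, hv, le_rfl, hS⟩
    obtain ⟨u0, ⟨hu0S, hu0adj⟩, huniq⟩ := hS v hv
    have hvw : G.Adj v (AIMAux.other G v u0) := (AIMAux.other_spec hreg hu0adj).1
    set w : V := AIMAux.other G v u0 with hwdef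
    have hwu : w ≠ u0 := (AIMAux.other_spec hreg hu0adj).2
    have hwS : w ∈ S := by
      by_contra hwS
      exact hwu (huniq w ⟨hwS, hvw⟩)
    obtain ⟨d, hd, hper⟩ := AIMAux.seq_period hreg hvw
    have hadj : ∀ n, G.Adj (AIMAux.seq G v w n) (AIMAux.seq G v w (n + 1)) :=
      AIMAux.seq_adj hreg hvw
    have hcons : ∀ a b, AIMAux.seq G v w a = AIMAux.seq G v w b →
        AIMAux.seq G v w (a + 1) = AIMAux.seq G v w (b + 1) :=
      fun a b h => AIMAux.seq_consistent hreg hvw h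
    have hcons' : ∀ a b, AIMAux.seq G v w (a + 1) = AIMAux.seq G v w (b + 1) →
        AIMAux.seq G v w a = AIMAux.seq G v w b :=
      fun a b h => AIMAux.seq_consistent' hreg hvw h
    have hne2 : ∀ n, AIMAux.seq G v w (n + 2) ≠ AIMAux.seq G v w n :=
      AIMAux.seq_ne hreg hvw
    set C : Set V := Set.range (AIMAux.seq G v w) with hC
    have hrep : ∀ x ∈ C, ∃ n, AIMAux.seq G v w (n + 1) = x := by
      rintro x ⟨m, rfl⟩
      refine ⟨m + d - 1, ?_⟩
      have e : m + d - 1 + 1 = m + d := by omega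
      rw [e]; exact hper m
    have hnbr : ∀ n q, G.Adj (AIMAux.seq G v w (n + 1)) q →
        q = AIMAux.seq G v w n ∨ q = AIMAux.seq G v w (n + 2) := by
      intro n q hq
      by_cases h : q = AIMAux.seq G v w n
      · exact Or.inl h
      · right
        rw [AIMAux.seq_two]
        exact AIMAux.eq_other hreg (hadj n).symm hq h
    have hclose : ∀ x ∈ C, ∀ q, G.Adj x q → q ∈ C := by
      intro x hx q hq
      obtain ⟨n, hn⟩ := hrep x hx
      subst hn
      rcases hnbr n q hq with h | h
      · exact ⟨n, h.symm⟩
      · exact ⟨n + 2, h.symm⟩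
    set A' : Set V := {x | ∃ n, AIMAux.seq G v w n = x ∧ AIMAux.seq G v w (n + 1) ∈ S}
      with hA'
    set S' : Set V := A' ∪ (S \ C) with hS'
    have memC : ∀ n, (AIMAux.seq G v w n ∈ S' ↔ AIMAux.seq G v w (n + 1) ∈ S) := by
      intro n
      simp only [hS', hA', Set.mem_union, Set.mem_setOf_eq, Set.mem_diff]
      constructor
      · rintro (⟨m, hm, hmS⟩ | ⟨hxS, hxC⟩)
        · rw [← hcons m n hm]; exact hmS
        · exact absurd ⟨n, rfl⟩ hxC
      · intro h
        exact Or.inl ⟨n, rfl, h⟩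
    have memNC : ∀ x, x ∉ C → (x ∈ S' ↔ x ∈ S) := by
      intro x hx
      simp only [hS', hA', Set.mem_union, Set.mem_setOf_eq, Set.mem_diff]
      constructor
      · rintro (⟨m, hm, _⟩ | ⟨hxS, _⟩)
        · exact absurd ⟨m, hm⟩ hx
        · exact hxS
      · intro h; exact Or.inr ⟨h, hx⟩
    have hvS' : v ∈ S' := by
      have h0 := (memC 0).mpr (by rw [AIMAux.seq_one]; exact hwS)
      rwa [AIMAux.seq_zero] at h0
    have hA'sub : A' ⊆ C := by rintro x ⟨n, hn, _⟩; exact ⟨n, hn⟩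
    set g : V → V := fun x => if h : ∃ n, AIMAux.seq G v w n = x
      then AIMAux.seq G v w (h.choose + 1) else x with hg
    have hgspec : ∀ n, g (AIMAux.seq G v w n) = AIMAux.seq G v w (n + 1) := by
      intro n
      have hex : ∃ m, AIMAux.seq G v w m = AIMAux.seq G v w n := ⟨n, rfl⟩
      simp only [hg]
      rw [dif_pos hex]
      exact hcons _ _ hex.choose_spec
    have hinj : Set.InjOn g A' := by
      rintro x ⟨nx, hnx, _⟩ y ⟨ny, hny, _⟩ hxy
      subst hnx; subst hny
      rw [hgspec, hgspec] at hxy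
      exact hcons' _ _ hxy
    have himg : g '' A' = S ∩ C := by
      ext y
      constructor
      · rintro ⟨x, ⟨n, hn, hnS⟩, rfl⟩
        subst hn
        rw [hgspec]
        exact ⟨hnS, ⟨n + 1, rfl⟩⟩
      · rintro ⟨hyS, hyC⟩
        obtain ⟨n, hn⟩ := hrep y hyC
        refine ⟨AIMAux.seq G v w n, ⟨n, rfl, hn ▸ hyS⟩, ?_⟩
        rw [hgspec, hn]
    have hcardA : A'.ncard = (S ∩ C).ncard := by
      rw [← himg, Set.ncard_image_of_injOn hinj]
    have hdisj : Disjoint A' (S \ C) := by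
      rw [Set.disjoint_left]
      rintro x hx ⟨_, hxC⟩
      exact hxC (hA'sub hx)
    have hcardS' : S'.ncard = S.ncard := by
      rw [hS', Set.ncard_union_eq hdisj (Set.toFinite _) (Set.toFinite _), hcardA,
        Set.ncard_inter_add_ncard_diff_eq_ncard S C (Set.toFinite _)]
    refine ⟨S', hvS', le_of_eq hcardS', ?_⟩
    intro y hyS'
    by_cases hyC : y ∈ C
    · obtain ⟨n, hn⟩ := hrep y hyC
      subst hn
      have h2 : AIMAux.seq G v w (n + 2) ∉ S := by
        intro hh
        exact hyS' ((memC (n + 1)).mpr hh)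
      obtain ⟨z, ⟨hzS, hzadj⟩, huz⟩ := hS _ h2
      rcases hnbr (n + 1) z hzadj with hz1 | hz3
      · have hn1S : AIMAux.seq G v w (n + 1) ∉ S := hz1 ▸ hzS
        have h3S : AIMAux.seq G v w (n + 3) ∈ S := by
          by_contra h3
          have h4 := huz (AIMAux.seq G v w (n + 3)) ⟨h3, hadj (n + 2)⟩
          rw [hz1] at h4
          exact hne2 (n + 1) h4
        refine ⟨AIMAux.seq G v w n, ⟨?_, (hadj n).symm⟩, ?_⟩
        · intro hmem
          exact hn1S ((memC n).mp hmem)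
        · rintro q ⟨hqS', hqadj⟩
          rcases hnbr n q hqadj with rfl | rfl
          · rfl
          · exact ((hqS' ((memC (n + 2)).mpr h3S))).elim
      · have h3S : AIMAux.seq G v w (n + 3) ∉ S := hz3 ▸ hzS
        have h1S : AIMAux.seq G v w (n + 1) ∈ S := by
          by_contra h1
          have h4 := huz (AIMAux.seq G v w (n + 1)) ⟨h1, (hadj (n + 1)).symm⟩
          rw [hz3] at h4
          exact hne2 (n + 1) h4.symm
        refine ⟨AIMAux.seq G v w (n + 2), ⟨?_, hadj (n + 1)⟩, ?_⟩
        · intro hmem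
          exact h3S ((memC (n + 2)).mp hmem)
        · rintro q ⟨hqS', hqadj⟩
          rcases hnbr n q hqadj with rfl | rfl
          · exact ((hqS' ((memC n).mpr h1S))).elim
          · rfl
    · have hyS : y ∉ S := fun h => hyS' ((memNC y hyC).mpr h)
      obtain ⟨z, ⟨hzS, hzadj⟩, huz⟩ := hS y hyS
      have hzC : z ∉ C := fun h => hyC (hclose z h y hzadj.symm)
      refine ⟨z, ⟨fun h => hzS ((memNC z hzC).mp h), hzadj⟩, ?_⟩
      rintro q ⟨hqS', hqadj⟩
      have hqC : q ∉ C := fun h => hyC (hclose q h y hqadj.symm)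
      exact huz q ⟨fun h => hqS' ((memNC q hqC).mpr h), hqadj⟩
  · rintro ⟨T, hTv, hTk, hT⟩
    refine ⟨{v} ∪ T, ?_, hT⟩
    have hu := Set.ncard_union_eq hTv.symm (Set.toFinite {v}) (Set.toFinite T)
    rw [Set.ncard_singleton] at hu
    omega
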